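/- Theorem 3.1 (resolvent formula). Let λ ∈ ℂ, set I(x) := exp(−i ∫₀ˣ V(t) dt + iλx) for x ∈ [0,2π], and assume D := I(2π) − i ∫₀^{2π} I(t) k(t) dt − ρ ≠ 0. Let g ∈ L²((0,2π); ℂ) and define f : [0,2π] → ℂ by f(x) = (−i / I(x)) · [ ( (∫₀^{2π} I(t) g(t) dt) / D ) · ( i ∫₀ˣ I(t) k(t) dt + ρ ) + ∫₀ˣ I(t) g(t) dt ]. Then f is absolutely continuous with some derivative f′ ∈ L¹(0,2π), satisfies f(0) = ρ f(2π), and satisfies i f′(x) + (V(x) − λ) f(x) + f(2π) k(x) = g(x) for almost every x ∈ (0,2π). -/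

import Mathlib

open MeasureTheory Real Complex
open scoped ENNReal NNReal

section Helpers

open Set

/-- Product of an integrable function and a function continuous on `[0,b]` is integrable. -/
lemma RF.mul_cont_integrableOn {b : ℝ} {φ h : ℝ → ℂ}
    (hφ : IntegrableOn φ (Ioc 0 b)) (hh : ContinuousOn h (Icc 0 b)) :
    IntegrableOn (fun t => φ t * h t) (Ioc 0 b) := by
  obtain ⟨C, hC⟩ := isCompact_Icc.exists_bound_of_continuousOn hh
  refine Integrable.mono' (hφ.norm.smul C) ?_ ?_
  · exact hφ.aestronglyMeasurable.mul
      ((hh.mono Ioc_subset_Icc_self).aestronglyMeasurable measurableSet_Ioc)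
  · refine (ae_restrict_iff' measurableSet_Ioc).2 (ae_of_all _ fun t ht => ?_)
    calc ‖φ t * h t‖ = ‖φ t‖ * ‖h t‖ := norm_mul _ _
    _ ≤ ‖φ t‖ * C := mul_le_mul_of_nonneg_left (hC t (Ioc_subset_Icc_self ht)) (norm_nonneg _)
    _ = C • ‖φ t‖ := by simp [mul_comm]

lemma RF.cont_prim {b : ℝ} {φ : ℝ → ℂ} (hφ : IntegrableOn φ (Ioc 0 b)) :
    ContinuousOn (fun x => ∫ t in Ioc 0 x, φ t) (Icc 0 b) :=
  intervalIntegral.continuousOn_primitive ((integrableOn_Icc_iff_integrableOn_Ioc enorm_ne_top).2 hφ)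

/-- Triangle Fubini: the product of integrals equals the sum of the two "triangle" iterated
integrals. -/
lemma RF.triangle_swap {x : ℝ} (hx : 0 ≤ x) {φ ψ : ℝ → ℂ}
    (hφ : IntegrableOn φ (Ioc 0 x)) (hψ : IntegrableOn ψ (Ioc 0 x)) :
    (∫ t in Ioc 0 x, φ t * ∫ s in Ioc 0 t, ψ s)
      + (∫ t in Ioc 0 x, ψ t * ∫ s in Ioc 0 t, φ s)
    = (∫ t in Ioc 0 x, φ t) * ∫ t in Ioc 0 x, ψ t := by
  clear hx
  set μ := volume.restrict (Ioc (0:ℝ) x) with hμ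
  set F : ℝ × ℝ → ℂ := {p : ℝ × ℝ | p.2 ≤ p.1}.indicator (fun p => φ p.1 * ψ p.2) with hF
  have hFint : Integrable F (μ.prod μ) :=
    (hφ.mul_prod hψ).indicator (measurableSet_le measurable_snd measurable_fst)
  have hswap : ∫ t, (∫ s, F (t, s) ∂μ) ∂μ = ∫ s, (∫ t, F (t, s) ∂μ) ∂μ :=
    integral_integral_swap (f := fun t s => F (t, s)) hFint
  have h1 : ∫ t, (∫ s, F (t, s) ∂μ) ∂μ = ∫ t in Ioc 0 x, φ t * ∫ s in Ioc 0 t, ψ s := by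
    refine setIntegral_congr_fun measurableSet_Ioc fun t ht => ?_
    have : (fun s => F (t, s)) = (Iic t).indicator (fun s => φ t * ψ s) := by
      funext s
      simp only [hF, Set.indicator_apply, Set.mem_setOf_eq, Set.mem_Iic]
    rw [this, integral_indicator measurableSet_Iic, hμ,
      Measure.restrict_restrict measurableSet_Iic]
    have hset : Iic t ∩ Ioc 0 x = Ioc 0 t := by
      rw [inter_comm, Ioc_inter_Iic, min_eq_right ht.2]
    rw [hset, integral_const_mul]
  have h2 : ∫ s, (∫ t, F (t, s) ∂μ) ∂μ
      = ∫ s in Ioc 0 x, ψ s * ((∫ t in Ioc 0 x, φ t) - ∫ t in Ioc 0 s, φ t) := by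
    refine setIntegral_congr_fun measurableSet_Ioc fun s hs => ?_
    have : (fun t => F (t, s)) = (Ici s).indicator (fun t => φ t * ψ s) := by
      funext t
      simp only [hF, Set.indicator_apply, Set.mem_setOf_eq, Set.mem_Ici]
    rw [this, integral_indicator measurableSet_Ici, hμ,
      Measure.restrict_restrict measurableSet_Ici]
    have hset : Ici s ∩ Ioc 0 x = Ioc s x ∪ {s} := by
      ext t
      simp only [mem_inter_iff, mem_Ici, mem_Ioc, mem_union, mem_singleton_iff]
      constructor
      · rintro ⟨h1', h2', h3'⟩
        rcases eq_or_lt_of_le h1' with h | h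
        · exact Or.inr h.symm
        · exact Or.inl ⟨h, h3'⟩
      · rintro (⟨h1', h2'⟩ | rfl)
        · exact ⟨le_of_lt h1', lt_trans hs.1 h1', h2'⟩
        · exact ⟨le_refl _, hs.1, hs.2⟩
    have hae : volume.restrict (Ioc s x ∪ {s}) = volume.restrict (Ioc s x) := by
      refine Measure.restrict_congr_set ?_
      refine union_ae_eq_left_of_ae_eq_empty ?_
      simp [ae_eq_empty]
    rw [hset, hae, integral_mul_const]
    have hsum : (∫ t in Ioc 0 s, φ t) + ∫ t in Ioc s x, φ t = ∫ t in Ioc 0 x, φ t := by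
      rw [← setIntegral_union (Ioc_disjoint_Ioc_of_le le_rfl) measurableSet_Ioc
        (hφ.mono_set (Ioc_subset_Ioc_right hs.2))
        (hφ.mono_set (Ioc_subset_Ioc_left (le_of_lt hs.1))),
        Ioc_union_Ioc_eq_Ioc (le_of_lt hs.1) hs.2]
    rw [mul_comm]
    congr 1
    linear_combination hsum
  have hψprim : IntegrableOn (fun s => ψ s * ∫ t in Ioc 0 s, φ t) (Ioc 0 x) :=
    RF.mul_cont_integrableOn hψ (RF.cont_prim hφ)
  have h3 : ∫ s in Ioc 0 x, ψ s * ((∫ t in Ioc 0 x, φ t) - ∫ t in Ioc 0 s, φ t)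
      = (∫ t in Ioc 0 x, φ t) * (∫ s in Ioc 0 x, ψ s)
        - ∫ s in Ioc 0 x, ψ s * ∫ t in Ioc 0 s, φ t := by
    have : (fun s => ψ s * ((∫ t in Ioc 0 x, φ t) - ∫ t in Ioc 0 s, φ t))
        = fun s => ψ s * (∫ t in Ioc 0 x, φ t) - ψ s * ∫ t in Ioc 0 s, φ t := by
      funext s; ring
    rw [this, integral_sub (hψ.mul_const _) hψprim, integral_mul_const, mul_comm]
  rw [h1, h2, h3] at hswap
  linear_combination hswap

lemma RF.pow_prim {b : ℝ} {ζ : ℝ → ℂ} (hζ : IntegrableOn ζ (Ioc 0 b)) (n : ℕ) :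
    ∀ x ∈ Icc (0:ℝ) b, (∫ t in Ioc 0 x, ζ t) ^ (n + 1)
      = ((n : ℂ) + 1) * ∫ t in Ioc 0 x, ζ t * (∫ s in Ioc 0 t, ζ s) ^ n := by
  induction n with
  | zero =>
    intro x hx
    simp
  | succ n ih =>
    intro x hx
    have hζx : IntegrableOn ζ (Ioc 0 x) := hζ.mono_set (Ioc_subset_Ioc_right hx.2)
    have hZc : ContinuousOn (fun y => ∫ t in Ioc 0 y, ζ t) (Icc 0 b) := RF.cont_prim hζ
    set Z : ℝ → ℂ := fun y => ∫ t in Ioc 0 y, ζ t with hZ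
    have hψb : IntegrableOn (fun t => ((n : ℂ) + 1) * (ζ t * Z t ^ n)) (Ioc 0 b) :=
      (RF.mul_cont_integrableOn hζ (hZc.pow n)).const_mul _
    have hψx : IntegrableOn (fun t => ((n : ℂ) + 1) * (ζ t * Z t ^ n)) (Ioc 0 x) :=
      hψb.mono_set (Ioc_subset_Ioc_right hx.2)
    have key := RF.triangle_swap hx.1 hζx hψx
    have hinner : ∀ t ∈ Ioc (0:ℝ) x,
        (∫ s in Ioc 0 t, ((n : ℂ) + 1) * (ζ s * Z s ^ n)) = Z t ^ (n + 1) := by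
      intro t ht
      rw [integral_const_mul, ← ih t ⟨le_of_lt ht.1, le_trans ht.2 hx.2⟩]
    have e1 : (∫ t in Ioc 0 x, ζ t * ∫ s in Ioc 0 t, ((n : ℂ) + 1) * (ζ s * Z s ^ n))
        = ∫ t in Ioc 0 x, ζ t * Z t ^ (n + 1) := by
      refine setIntegral_congr_fun measurableSet_Ioc fun t ht => ?_
      rw [hinner t ht]
    have e2 : (∫ t in Ioc 0 x, ((n : ℂ) + 1) * (ζ t * Z t ^ n) * ∫ s in Ioc 0 t, ζ s)
        = ((n : ℂ) + 1) * ∫ t in Ioc 0 x, ζ t * Z t ^ (n + 1) := by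
      rw [← integral_const_mul]
      refine setIntegral_congr_fun measurableSet_Ioc fun t ht => ?_
      show ((n : ℂ) + 1) * (ζ t * Z t ^ n) * Z t = ((n : ℂ) + 1) * (ζ t * Z t ^ (n + 1))
      ring
    have e3 : (∫ t in Ioc 0 x, ((n : ℂ) + 1) * (ζ t * Z t ^ n))
        = Z x ^ (n + 1) := by
      rw [integral_const_mul, ← ih x hx]
    rw [e1, e2, e3] at key
    push_cast
    linear_combination -key

set_option maxHeartbeats 1000000 in
lemma RF.exp_prim {b : ℝ} {ζ : ℝ → ℂ} (hζ : IntegrableOn ζ (Ioc 0 b)) :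
    ∀ x ∈ Icc (0:ℝ) b, Complex.exp (∫ t in Ioc 0 x, ζ t)
      = 1 + ∫ t in Ioc 0 x, ζ t * Complex.exp (∫ s in Ioc 0 t, ζ s) := by
  intro x hx
  have hZc : ContinuousOn (fun y => ∫ t in Ioc 0 y, ζ t) (Icc 0 b) := RF.cont_prim hζ
  set Z : ℝ → ℂ := fun y => ∫ t in Ioc 0 y, ζ t with hZ
  obtain ⟨M, hM⟩ := isCompact_Icc.exists_bound_of_continuousOn hZc
  have hM0 : 0 ≤ M := le_trans (norm_nonneg _)
    (hM 0 ⟨le_refl _, le_trans hx.1 hx.2⟩)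
  have hζx : IntegrableOn ζ (Ioc 0 x) := hζ.mono_set (Ioc_subset_Ioc_right hx.2)
  have hsubI : Ioc (0:ℝ) x ⊆ Icc 0 b := fun t ht => ⟨le_of_lt ht.1, le_trans ht.2 hx.2⟩
  set f : ℕ → ℝ → ℂ := fun n t => ζ t * Z t ^ n / (n.factorial : ℂ) with hf
  have hmeas : ∀ n, AEStronglyMeasurable (f n) (volume.restrict (Ioc 0 x)) := by
    intro n
    simp only [hf, div_eq_mul_inv]
    exact (hζx.aestronglyMeasurable.mul
      (((hZc.mono hsubI).aestronglyMeasurable measurableSet_Ioc).pow n)).mul_const _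
  set M' : NNReal := ⟨M, hM0⟩ with hM'
  set C : ℕ → NNReal := fun n => M' ^ n / (n.factorial : NNReal) with hC
  have hnorm : ∀ n, ∀ t ∈ Ioc (0:ℝ) x, ‖f n t‖₊ ≤ ‖ζ t‖₊ * C n := by
    intro n t ht
    have hZt : ‖Z t‖₊ ≤ M' := by
      have h := hM t (hsubI ht)
      rw [← NNReal.coe_le_coe, coe_nnnorm]
      exact h
    have h1 : ‖f n t‖₊ = ‖ζ t‖₊ * ‖Z t‖₊ ^ n / (n.factorial : NNReal) := by
      simp only [hf, nnnorm_div, nnnorm_mul, nnnorm_pow]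
      congr 1
      simp [Nat.cast_injective]
    calc ‖f n t‖₊ = ‖ζ t‖₊ * ‖Z t‖₊ ^ n / (n.factorial : NNReal) := h1
      _ ≤ ‖ζ t‖₊ * M' ^ n / (n.factorial : NNReal) := by gcongr
      _ = ‖ζ t‖₊ * C n := by rw [hC, mul_div_assoc]
  have hCsum : Summable C := by
    rw [← NNReal.summable_coe]
    refine Summable.congr (Real.summable_pow_div_factorial M) fun n => ?_
    rw [hC]
    push_cast [hM']
    congr 1
  have hL : (∫⁻ t, ‖ζ t‖₊ ∂(volume.restrict (Ioc 0 x))) ≠ ⊤ := hζx.2.ne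
  have hbound : ∑' n, ∫⁻ t, ‖f n t‖₊ ∂(volume.restrict (Ioc 0 x)) ≠ ⊤ := by
    have key2 : ∀ n, (∫⁻ t, ‖f n t‖₊ ∂(volume.restrict (Ioc 0 x)))
        ≤ (∫⁻ t, ‖ζ t‖₊ ∂(volume.restrict (Ioc 0 x))) * C n := by
      intro n
      calc (∫⁻ t, ‖f n t‖₊ ∂(volume.restrict (Ioc 0 x)))
          ≤ ∫⁻ t, (‖ζ t‖₊ : ℝ≥0∞) * (C n : ℝ≥0∞) ∂(volume.restrict (Ioc 0 x)) := by
            refine lintegral_mono_ae ((ae_restrict_iff' measurableSet_Ioc).2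
              (ae_of_all _ fun t ht => ?_))
            rw [← ENNReal.coe_mul]
            exact ENNReal.coe_le_coe.2 (hnorm n t ht)
        _ = (∫⁻ t, ‖ζ t‖₊ ∂(volume.restrict (Ioc 0 x))) * C n :=
            lintegral_mul_const' _ _ ENNReal.coe_ne_top
    refine ne_top_of_le_ne_top ?_ (le_trans (ENNReal.tsum_le_tsum key2)
      (le_of_eq ENNReal.tsum_mul_left))
    exact ENNReal.mul_ne_top hL (ENNReal.tsum_coe_ne_top_iff_summable.2 hCsum)
  have hswap := integral_tsum hmeas hbound
  calc Complex.exp (Z x) = ∑' n : ℕ, Z x ^ n / (n.factorial : ℂ) := by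
        rw [Complex.exp_eq_exp_ℂ, NormedSpace.exp_eq_tsum_div]
    _ = Z x ^ 0 / ((Nat.factorial 0 : ℕ) : ℂ)
        + ∑' n : ℕ, Z x ^ (n + 1) / ((Nat.factorial (n + 1) : ℕ) : ℂ) :=
        Summable.tsum_eq_zero_add (NormedSpace.expSeries_div_summable (Z x))
    _ = 1 + ∑' n : ℕ, ∫ t in Ioc 0 x, f n t := by
        congr 1
        · simp
        refine tsum_congr fun n => ?_
        have hp := RF.pow_prim hζ n x hx
        simp only [hZ, hf]
        rw [hp]
        have hfac : ((Nat.factorial (n + 1) : ℕ) : ℂ)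
            = ((n : ℂ) + 1) * (Nat.factorial n : ℂ) := by
          push_cast [Nat.factorial_succ]
          ring
        rw [hfac, mul_div_mul_left _ _ (Nat.cast_add_one_ne_zero n)]
        rw [← integral_div]
    _ = 1 + ∫ t in Ioc 0 x, ∑' n, f n t := by rw [hswap]
    _ = 1 + ∫ t in Ioc 0 x, ζ t * Complex.exp (Z t) := by
        congr 1
        refine setIntegral_congr_fun measurableSet_Ioc fun t ht => ?_
        rw [Complex.exp_eq_exp_ℂ, NormedSpace.exp_eq_tsum_div, ← tsum_mul_left]
        exact tsum_congr fun n => by simp only [hf]; exact mul_div_assoc _ _ _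

end Helpers

/-- `f : [0,2π] → ℂ` is absolutely continuous with derivative `f'`:
`f' ∈ L¹(0,2π)` and `f x = f 0 + ∫₀ˣ f'` for all `x ∈ [0,2π]`. -/
def IsACWithDeriv (f f' : ℝ → ℂ) : Prop :=
  MeasureTheory.IntegrableOn f' (Set.Ioc 0 (2 * Real.pi)) ∧
    ∀ x ∈ Set.Icc (0:ℝ) (2 * Real.pi), f x = f 0 + ∫ t in (0:ℝ)..x, f' t

/-- Theorem 3.1 (resolvent formula): with `I(x) = exp(−i∫₀ˣ V + iλx)` and
`D = I(2π) − i∫₀^{2π} I k − ρ ≠ 0`, the explicit function `f` built from `g` solves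
`i f' + (V − λ) f + f(2π) k = g` with the boundary condition `f(0) = ρ f(2π)`. -/
theorem resolvent_formula
    (V k : ℝ → ℂ)
    (hV : MeasureTheory.MemLp V ⊤ (MeasureTheory.volume.restrict (Set.Ioo 0 (2 * Real.pi))))
    (hk : MeasureTheory.MemLp k 2 (MeasureTheory.volume.restrict (Set.Ioo 0 (2 * Real.pi))))
    (ρ : ℂ) (lam : ℂ) (g : ℝ → ℂ)
    (hg : MeasureTheory.MemLp g 2 (MeasureTheory.volume.restrict (Set.Ioo 0 (2 * Real.pi))))
    (Iint : ℝ → ℂ)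
    (hIint : ∀ x : ℝ, Iint x =
      Complex.exp (-(Complex.I * ∫ t in (0:ℝ)..x, V t) + Complex.I * lam * x))
    (D : ℂ)
    (hD : D = Iint (2 * Real.pi)
      - Complex.I * (∫ t in (0:ℝ)..(2 * Real.pi), Iint t * k t) - ρ)
    (hD0 : D ≠ 0)
    (f : ℝ → ℂ)
    (hf : ∀ x : ℝ, f x = (-Complex.I / Iint x) *
      (((∫ t in (0:ℝ)..(2 * Real.pi), Iint t * g t) / D) *
          (Complex.I * (∫ t in (0:ℝ)..x, Iint t * k t) + ρ)
        + ∫ t in (0:ℝ)..x, Iint t * g t)) :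
    ∃ f' : ℝ → ℂ, IsACWithDeriv f f' ∧
      f 0 = ρ * f (2 * Real.pi) ∧
      ∀ᵐ x ∂(MeasureTheory.volume.restrict (Set.Ioo 0 (2 * Real.pi))),
        Complex.I * f' x + (V x - lam) * f x + f (2 * Real.pi) * k x = g x := by
  classical
  set b : ℝ := 2 * Real.pi with hbdef
  have hb : (0:ℝ) ≤ b := by positivity
  have hbmem : b ∈ Set.Icc (0:ℝ) b := ⟨hb, le_refl b⟩
  have h0mem : (0:ℝ) ∈ Set.Icc (0:ℝ) b := ⟨le_refl _, hb⟩
  haveI : IsFiniteMeasure (volume.restrict (Set.Ioo (0:ℝ) b)) :=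
    ⟨by rw [Measure.restrict_apply_univ]; exact measure_Ioo_lt_top⟩
  -- basic integrabilities
  have hVi : IntegrableOn V (Set.Ioc 0 b) := by
    rw [integrableOn_Ioc_iff_integrableOn_Ioo]
    exact memLp_one_iff_integrable.1 (hV.mono_exponent le_top)
  have hki : IntegrableOn k (Set.Ioc 0 b) := by
    rw [integrableOn_Ioc_iff_integrableOn_Ioo]
    exact memLp_one_iff_integrable.1 (hk.mono_exponent one_le_two)
  have hgi : IntegrableOn g (Set.Ioc 0 b) := by
    rw [integrableOn_Ioc_iff_integrableOn_Ioo]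
    exact memLp_one_iff_integrable.1 (hg.mono_exponent one_le_two)
  -- the logarithmic derivative
  set ζ : ℝ → ℂ := fun t => Complex.I * V t - Complex.I * lam with hζdef
  have hζ : IntegrableOn ζ (Set.Ioc 0 b) :=
    (hVi.const_mul _).sub (integrableOn_const measure_Ioc_lt_top.ne)
  set Z : ℝ → ℂ := fun y => ∫ t in Set.Ioc 0 y, ζ t with hZdef
  set E : ℝ → ℂ := fun y => Complex.exp (Z y) with hEdef
  have hZc : ContinuousOn Z (Set.Icc 0 b) := RF.cont_prim hζ
  have hEc : ContinuousOn E (Set.Icc 0 b) := Complex.continuous_exp.comp_continuousOn hZc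
  -- computation of Z on [0, b]
  have hZeq : ∀ x ∈ Set.Icc (0:ℝ) b,
      Z x = Complex.I * (∫ t in (0:ℝ)..x, V t) - Complex.I * lam * x := by
    intro x hx
    have hVx : IntervalIntegrable V volume 0 x :=
      (intervalIntegrable_iff_integrableOn_Ioc_of_le hx.1).2
        (hVi.mono_set (Set.Ioc_subset_Ioc_right hx.2))
    have : Z x = ∫ t in (0:ℝ)..x, ζ t := (intervalIntegral.integral_of_le hx.1).symm
    rw [this, hζdef]
    rw [intervalIntegral.integral_sub (hVx.const_mul _) intervalIntegrable_const,
      intervalIntegral.integral_const_mul, intervalIntegral.integral_const]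
    rw [Complex.real_smul]
    push_cast
    ring
  have hIintZ : ∀ x ∈ Set.Icc (0:ℝ) b, Iint x = Complex.exp (-Z x) := by
    intro x hx
    rw [hIint x, hZeq x hx]
    congr 1
    ring
  have hIintE : ∀ x ∈ Set.Icc (0:ℝ) b, Iint x * E x = 1 := by
    intro x hx
    rw [hIintZ x hx, hEdef, ← Complex.exp_add]
    simp
  have hIintc : ContinuousOn Iint (Set.Icc 0 b) :=
    ContinuousOn.congr (Complex.continuous_exp.comp_continuousOn hZc.neg) hIintZ
  have hdivE : ∀ x ∈ Set.Icc (0:ℝ) b, -Complex.I / Iint x = -Complex.I * E x := by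
    intro x hx
    rw [hIintZ x hx, Complex.exp_neg, div_inv_eq_mul, hEdef]
  -- the primitives P and Q
  have hPk : IntegrableOn (fun t => Iint t * k t) (Set.Ioc 0 b) :=
    (RF.mul_cont_integrableOn hki hIintc).congr
      (Filter.Eventually.of_forall fun t => mul_comm (k t) (Iint t))
  have hQg : IntegrableOn (fun t => Iint t * g t) (Set.Ioc 0 b) :=
    (RF.mul_cont_integrableOn hgi hIintc).congr
      (Filter.Eventually.of_forall fun t => mul_comm (g t) (Iint t))
  set P : ℝ → ℂ := fun x => ∫ t in Set.Ioc 0 x, Iint t * k t with hPdef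
  set Q : ℝ → ℂ := fun x => ∫ t in Set.Ioc 0 x, Iint t * g t with hQdef
  have hPc : ContinuousOn P (Set.Icc 0 b) := RF.cont_prim hPk
  have hQc : ContinuousOn Q (Set.Icc 0 b) := RF.cont_prim hQg
  have hPint : ∀ x ∈ Set.Icc (0:ℝ) b, (∫ t in (0:ℝ)..x, Iint t * k t) = P x :=
    fun x hx => intervalIntegral.integral_of_le hx.1
  have hQint : ∀ x ∈ Set.Icc (0:ℝ) b, (∫ t in (0:ℝ)..x, Iint t * g t) = Q x :=
    fun x hx => intervalIntegral.integral_of_le hx.1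
  have hP0 : P 0 = 0 := by rw [hPdef]; simp
  have hQ0 : Q 0 = 0 := by rw [hQdef]; simp
  set c : ℂ := Q b / D with hcdef
  set u : ℝ → ℂ := fun x => c * (Complex.I * P x + ρ) + Q x with hudef
  have huc : ContinuousOn u (Set.Icc 0 b) :=
    (continuousOn_const.mul ((continuousOn_const.mul hPc).add continuousOn_const)).add hQc
  have hu0 : u 0 = c * ρ := by rw [hudef]; simp [hP0, hQ0]
  -- rewriting f
  have hfeq : ∀ x ∈ Set.Icc (0:ℝ) b, f x = -Complex.I * E x * u x := by
    intro x hx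
    rw [hf x, hQint b hbmem, hPint x hx, hQint x hx, hdivE x hx]
  have hf0 : f 0 = -Complex.I * (c * ρ) := by
    rw [hfeq 0 h0mem, hu0]
    have hE0 : E 0 = 1 := by
      rw [hEdef, hZdef]
      simp
    rw [hE0]
    ring
  have hDeq : D = Iint b - Complex.I * P b - ρ := by rw [hD, hPint b hbmem]
  have hfb : f b = -Complex.I * c := by
    rw [hfeq b hbmem]
    have hQbD : Q b = c * (Iint b - Complex.I * P b - ρ) := by
      rw [← hDeq, hcdef, div_mul_cancel₀ _ hD0]
    have h1 := hIintE b hbmem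
    rw [hudef]
    linear_combination (-Complex.I * E b) * hQbD + (-Complex.I * c) * h1
  -- the derivative
  set f' : ℝ → ℂ := fun t => ζ t * f t + c * k t - Complex.I * g t with hf'def
  refine ⟨f', ⟨?_, ?_⟩, ?_, ?_⟩
  · -- integrability of f'
    have hfc : ContinuousOn f (Set.Icc 0 b) :=
      ContinuousOn.congr ((continuousOn_const.mul hEc).mul huc) hfeq
    exact ((RF.mul_cont_integrableOn hζ hfc).add (hki.const_mul c)).sub (hgi.const_mul _)
  · -- absolute continuity: f x = f 0 + ∫₀ˣ f'
    intro x hx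
    rw [intervalIntegral.integral_of_le hx.1]
    set φ : ℝ → ℂ := fun t => (c * Complex.I) * (Iint t * k t) + Iint t * g t with hφdef
    set ψ : ℝ → ℂ := fun t => ζ t * E t with hψdef
    have hφ : IntegrableOn φ (Set.Ioc 0 b) := (hPk.const_mul _).add hQg
    have hψ : IntegrableOn ψ (Set.Ioc 0 b) := RF.mul_cont_integrableOn hζ hEc
    have hsubx : Set.Ioc (0:ℝ) x ⊆ Set.Ioc 0 b := Set.Ioc_subset_Ioc_right hx.2
    have hsubIcc : Set.Ioc (0:ℝ) x ⊆ Set.Icc 0 b :=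
      fun t ht => ⟨le_of_lt ht.1, le_trans ht.2 hx.2⟩
    -- the inner primitives
    have hφprim : ∀ y ∈ Set.Icc (0:ℝ) b, (∫ t in Set.Ioc 0 y, φ t) = u y - u 0 := by
      intro y hy
      rw [hφdef, integral_add
        ((hPk.mono_set (Set.Ioc_subset_Ioc_right hy.2)).const_mul _)
        (hQg.mono_set (Set.Ioc_subset_Ioc_right hy.2)), integral_const_mul, hu0]
      simp only [hudef, hPdef, hQdef]
      ring
    have hEprim : ∀ y ∈ Set.Icc (0:ℝ) b, (∫ t in Set.Ioc 0 y, ψ t) = E y - 1 := by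
      intro y hy
      have := RF.exp_prim hζ y hy
      rw [hψdef, hEdef]
      simp only [hZdef]
      linear_combination -this
    -- triangle identity
    have key := RF.triangle_swap hx.1 (hψ.mono_set hsubx) (hφ.mono_set hsubx)
    have e1 : (∫ t in Set.Ioc 0 x, ψ t * ∫ s in Set.Ioc 0 t, φ s)
        = (∫ t in Set.Ioc 0 x, ψ t * u t) - u 0 * ∫ t in Set.Ioc 0 x, ψ t := by
      have h1 : (∫ t in Set.Ioc 0 x, ψ t * ∫ s in Set.Ioc 0 t, φ s)
          = ∫ t in Set.Ioc 0 x, (ψ t * u t - u 0 * ψ t) := by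
        refine setIntegral_congr_fun measurableSet_Ioc fun t ht => ?_
        rw [hφprim t (hsubIcc ht)]
        ring
      rw [h1, integral_sub ((RF.mul_cont_integrableOn hψ huc).mono_set hsubx)
        (((hψ.mono_set hsubx)).const_mul _), integral_const_mul]
    have e2 : (∫ t in Set.Ioc 0 x, φ t * ∫ s in Set.Ioc 0 t, ψ s)
        = (∫ t in Set.Ioc 0 x, φ t * E t) - ∫ t in Set.Ioc 0 x, φ t := by
      have h1 : (∫ t in Set.Ioc 0 x, φ t * ∫ s in Set.Ioc 0 t, ψ s)
          = ∫ t in Set.Ioc 0 x, (φ t * E t - φ t) := by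
        refine setIntegral_congr_fun measurableSet_Ioc fun t ht => ?_
        rw [hEprim t (hsubIcc ht)]
        ring
      rw [h1, integral_sub ((RF.mul_cont_integrableOn hφ hEc).mono_set hsubx)
        (hφ.mono_set hsubx)]
    rw [e1, e2, hEprim x hx, hφprim x hx] at key
    -- identification of the integrand
    have hf'eq : ∀ t ∈ Set.Ioc (0:ℝ) x,
        f' t = -Complex.I * (ψ t * u t + φ t * E t) := by
      intro t ht
      have h1 := hIintE t (hsubIcc ht)
      have h2 := hfeq t (hsubIcc ht)
      simp only [hf'def, hψdef, hφdef]
      linear_combination ζ t * h2 + (Complex.I * g t - c * k t) * h1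
        + (c * k t * Iint t * E t) * Complex.I_mul_I
    have hintf' : (∫ t in Set.Ioc 0 x, f' t)
        = -Complex.I * ((∫ t in Set.Ioc 0 x, ψ t * u t)
          + ∫ t in Set.Ioc 0 x, φ t * E t) := by
      rw [← integral_add ((RF.mul_cont_integrableOn hψ huc).mono_set hsubx)
        ((RF.mul_cont_integrableOn hφ hEc).mono_set hsubx), ← integral_const_mul]
      exact setIntegral_congr_fun measurableSet_Ioc hf'eq
    rw [hintf', hfeq x hx, hf0]
    linear_combination Complex.I * key - Complex.I * hu0
  · -- boundary condition
    rw [hf0, hfb]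
    ring
  · -- the differential equation (holds everywhere)
    refine ae_of_all _ fun x => ?_
    rw [hfb, hf'def]
    simp only [hζdef]
    linear_combination ((V x - lam) * f x - g x) * Complex.I_mul_I
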